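/- The m-dimensional array S of size d² × d² × ⋯ × d² formed by concatenating the 2m-dimensional array S'[i_0,…,i_{2m-1}] = ω^{∏_{n=m}^{2m-1} i_n + Σ_{n=0}^{m-1} i_n i_{n+m}} (ω = e^{2πi/d}), i.e., S[d·q_0+r_0, …, d·q_{m-1}+r_{m-1}] = S'[q_0,…,q_{m-1},r_0,…,r_{m-1}] for 0 ≤ q_k, r_k < d, is a perfect array: all off-peak periodic autocorrelations of S vanish. -/

import Mathlib

open Finset Complex


def FH.rr (d s r : ℕ) : ℕ := (r + s % d ^ 2 % d) % d
def FH.cc (d s r : ℕ) : ℕ := (r + s % d ^ 2 % d) / d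
def FH.tt (d s r : ℕ) : ℕ := r + (d - 1) * FH.rr d s r
def FH.CC (d : ℕ) {m : ℕ} (s r : Fin m → ℕ) : ℕ :=
  (∏ n, r n) + ((d - 1) * ∏ n, FH.rr d (s n) (r n) +
    ∑ n, (d - 1) * ((s n % d ^ 2 / d + FH.cc d (s n) (r n)) * FH.rr d (s n) (r n)))

section
variable {d : ℕ}

lemma FH.pow_congr (hd : 0 < d) {ω : ℂ} (hω : ω ^ d = 1) {a b : ℕ}
    (h : (a : ZMod d) = (b : ZMod d)) : ω ^ a = ω ^ b := by
  have h' : a % d = b % d := (ZMod.natCast_eq_natCast_iff' a b d).mp h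
  have key : ∀ c : ℕ, ω ^ c = ω ^ (c % d) := by
    intro c
    conv_lhs => rw [← Nat.mod_add_div c d, pow_add, pow_mul, hω, one_pow, mul_one]
  rw [key a, key b, h']

lemma FH.geom_zero {x : ℂ} (hx1 : x ≠ 1) (hxd : x ^ d = 1) :
    ∑ j ∈ range d, x ^ j = 0 := by
  rw [geom_sum_eq hx1, hxd, sub_self, zero_div]

lemma FH.exp_pow_eq_one_iff (hd : 0 < d) (k : ℕ) :
    Complex.exp (2 * Real.pi * Complex.I / d) ^ k = 1 ↔ d ∣ k := by
  have hdc : (d : ℂ) ≠ 0 := Nat.cast_ne_zero.mpr hd.ne'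
  have h2 : (2 * (Real.pi : ℂ) * Complex.I) ≠ 0 := by
    simp [Real.pi_ne_zero, Complex.I_ne_zero, Complex.ofReal_ne_zero]
  rw [← Complex.exp_nat_mul, Complex.exp_eq_one_iff]
  constructor
  · rintro ⟨n, hn⟩
    have hk : (k : ℂ) = n * d := by
      apply mul_right_cancel₀ h2
      field_simp at hn
      linear_combination (2 * (Real.pi : ℂ) * Complex.I) * hn
    have hk' : (k : ℤ) = n * d := by exact_mod_cast hk
    exact Int.natCast_dvd_natCast.mp ⟨n, by linarith⟩
  · rintro ⟨c, rfl⟩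
    refine ⟨c, ?_⟩
    push_cast
    field_simp

lemma FH.conj_exp_pow (hd : 0 < d) (B : ℕ) :
    (starRingEnd ℂ) (Complex.exp (2 * Real.pi * Complex.I / d) ^ B) =
      Complex.exp (2 * Real.pi * Complex.I / d) ^ ((d - 1) * B) := by
  set ω := Complex.exp (2 * Real.pi * Complex.I / d) with hω
  have hω1 : ω ^ d = 1 := (FH.exp_pow_eq_one_iff hd d).mpr dvd_rfl
  have hconj : (starRingEnd ℂ) ω = ω⁻¹ := by
    rw [hω, ← Complex.exp_conj, ← Complex.exp_neg]
    congr 1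
    simp [map_div₀, Complex.conj_I, map_ofNat]
    ring
  have hmul : ω ^ ((d - 1) * B) * ω ^ B = 1 := by
    rw [← pow_add]
    have h1 : (d - 1) * B + B = d * B := by
      have h2 : d - 1 + 1 = d := Nat.succ_pred_eq_of_pos hd
      nlinarith [h2]
    rw [h1, pow_mul, hω1, one_pow]
  rw [map_pow, hconj, inv_pow]
  exact (eq_inv_of_mul_eq_one_left hmul).symm

lemma FH.mod_sq (hd : 0 < d) (a b : ℕ) (hb : b < d) :
    (d * a + b) % d ^ 2 = d * (a % d) + b := by
  have hx : d * (a % d) + b < d ^ 2 := by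
    have h1 : a % d < d := Nat.mod_lt a hd
    calc d * (a % d) + b < d * (a % d) + d := by omega
    _ = d * (a % d + 1) := by ring
    _ ≤ d * d := Nat.mul_le_mul_left d (by omega)
    _ = d ^ 2 := (sq d).symm
  conv_lhs => rw [show d * a + b = d ^ 2 * (a / d) + (d * (a % d) + b) by
    conv_lhs => rw [← Nat.div_add_mod a d]
    ring]
  rw [Nat.mul_add_mod, Nat.mod_eq_of_lt hx]

lemma FH.shift_decomp (hd : 0 < d) (q r s : ℕ) (hr : r < d) :
    ((d * q + r + s) % d ^ 2) / d = (q + s % d ^ 2 / d + FH.cc d s r) % d ∧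
      ((d * q + r + s) % d ^ 2) % d = FH.rr d s r := by
  have h1 : (d * q + r + s) % d ^ 2 = (d * q + r + s % d ^ 2) % d ^ 2 :=
    (Nat.add_mod_mod _ _ _).symm
  have h2 : d * (s % d ^ 2 / d) + s % d ^ 2 % d = s % d ^ 2 := Nat.div_add_mod _ d
  have h3 : d * FH.cc d s r + FH.rr d s r = r + s % d ^ 2 % d := Nat.div_add_mod _ d
  have h4 : d * q + r + s % d ^ 2 =
      d * (q + s % d ^ 2 / d + FH.cc d s r) + FH.rr d s r := by
    calc d * q + r + s % d ^ 2
        = d * q + r + (d * (s % d ^ 2 / d) + s % d ^ 2 % d) := by rw [h2]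
      _ = d * q + d * (s % d ^ 2 / d) + (r + s % d ^ 2 % d) := by ring
      _ = d * q + d * (s % d ^ 2 / d) + (d * FH.cc d s r + FH.rr d s r) := by rw [h3]
      _ = _ := by ring
  have hrr : FH.rr d s r < d := Nat.mod_lt _ hd
  rw [h1, h4, FH.mod_sq hd _ _ hrr]
  constructor
  · rw [Nat.mul_add_div hd, Nat.div_eq_of_lt hrr, add_zero]
  · rw [Nat.mul_add_mod, Nat.mod_eq_of_lt hrr]

lemma FH.reindex (hd : 0 < d) (m : ℕ) (g : (Fin m → ℕ) → ℂ) :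
    ∑ x ∈ Fintype.piFinset (fun _ : Fin m => range (d ^ 2)), g x =
      ∑ r ∈ Fintype.piFinset (fun _ : Fin m => range d),
        ∑ q ∈ Fintype.piFinset (fun _ : Fin m => range d), g (fun n => d * q n + r n) := by
  rw [← Finset.sum_product']
  apply Finset.sum_nbij' (i := fun x => ((fun n => x n % d : Fin m → ℕ), fun n => x n / d))
    (j := fun p => (fun n => d * p.2 n + p.1 n : Fin m → ℕ))
  · intro x hx
    simp only [Fintype.mem_piFinset, Finset.mem_range] at hx
    simp only [Finset.mem_product, Fintype.mem_piFinset, Finset.mem_range]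
    constructor
    · intro n; exact Nat.mod_lt _ hd
    · intro n
      have := hx n
      rw [Nat.div_lt_iff_lt_mul hd, ← sq]
      exact this
  · intro p hp
    simp only [Finset.mem_product, Fintype.mem_piFinset, Finset.mem_range] at hp
    simp only [Fintype.mem_piFinset, Finset.mem_range]
    intro n
    calc d * p.2 n + p.1 n < d * p.2 n + d := by have := hp.1 n; omega
      _ = d * (p.2 n + 1) := by ring
      _ ≤ d * d := Nat.mul_le_mul_left d (by have := hp.2 n; omega)
      _ = d ^ 2 := (sq d).symm
  · intro x hx
    funext n
    exact Nat.div_add_mod (x n) d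
  · intro p hp
    simp only [Finset.mem_product, Fintype.mem_piFinset, Finset.mem_range] at hp
    refine Prod.ext (funext fun n => ?_) (funext fun n => ?_)
    · show (d * p.2 n + p.1 n) % d = p.1 n
      rw [Nat.mul_add_mod, Nat.mod_eq_of_lt (hp.1 n)]
    · show (d * p.2 n + p.1 n) / d = p.2 n
      rw [Nat.mul_add_div hd, Nat.div_eq_of_lt (hp.1 n), add_zero]
  · intro x hx
    congr 1
    funext n
    exact (Nat.div_add_mod (x n) d).symm

lemma FH.term_eq (hd : 0 < d) {m : ℕ} (s q r : Fin m → ℕ)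
    (hq : ∀ n, q n < d) (hr : ∀ n, r n < d) :
    Complex.exp (2 * Real.pi * Complex.I / d) ^
        ((∏ n : Fin m, ((d * q n + r n) % d)) +
          ∑ n : Fin m, ((d * q n + r n) / d) * ((d * q n + r n) % d)) *
      (starRingEnd ℂ) (Complex.exp (2 * Real.pi * Complex.I / d) ^
        ((∏ n : Fin m, (((d * q n + r n + s n) % d ^ 2) % d)) +
          ∑ n : Fin m, (((d * q n + r n + s n) % d ^ 2) / d) *
            (((d * q n + r n + s n) % d ^ 2) % d))) =
    Complex.exp (2 * Real.pi * Complex.I / d) ^ (FH.CC d s r) *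
      ∏ n : Fin m, (Complex.exp (2 * Real.pi * Complex.I / d) ^ FH.tt d (s n) (r n)) ^ q n := by
  set ω := Complex.exp (2 * Real.pi * Complex.I / d) with hωdef
  have hω1 : ω ^ d = 1 := (FH.exp_pow_eq_one_iff hd d).mpr dvd_rfl
  have hmod : ∀ n, (d * q n + r n) % d = r n := by
    intro n; rw [Nat.mul_add_mod, Nat.mod_eq_of_lt (hr n)]
  have hdiv : ∀ n, (d * q n + r n) / d = q n := by
    intro n; rw [Nat.mul_add_div hd, Nat.div_eq_of_lt (hr n), add_zero]
  have hsd : ∀ n, ((d * q n + r n + s n) % d ^ 2) / d =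
      (q n + s n % d ^ 2 / d + FH.cc d (s n) (r n)) % d :=
    fun n => (FH.shift_decomp hd (q n) (r n) (s n) (hr n)).1
  have hsm : ∀ n, ((d * q n + r n + s n) % d ^ 2) % d = FH.rr d (s n) (r n) :=
    fun n => (FH.shift_decomp hd (q n) (r n) (s n) (hr n)).2
  simp only [hmod, hdiv, hsd, hsm, hωdef, FH.conj_exp_pow hd]
  simp only [← hωdef]
  rw [mul_add (d - 1), Finset.mul_sum]
  simp only [FH.CC, pow_add, ← Finset.prod_pow_eq_pow_sum, ← pow_mul]
  have hd1 : ((d - 1 : ℕ) : ZMod d) = (d : ZMod d) - 1 := by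
    have h1 : 1 ≤ d := hd
    push_cast [Nat.cast_sub h1]
    ring
  calc (ω ^ (∏ n : Fin m, r n) * ∏ n : Fin m, ω ^ (q n * r n)) *
        (ω ^ ((d - 1) * ∏ n : Fin m, FH.rr d (s n) (r n)) *
          ∏ n : Fin m, ω ^ ((d - 1) * ((q n + s n % d ^ 2 / d + FH.cc d (s n) (r n)) % d *
            FH.rr d (s n) (r n))))
      = ω ^ (∏ n : Fin m, r n) * ω ^ ((d - 1) * ∏ n : Fin m, FH.rr d (s n) (r n)) *
        ∏ n : Fin m, (ω ^ (q n * r n) *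
          ω ^ ((d - 1) * ((q n + s n % d ^ 2 / d + FH.cc d (s n) (r n)) % d *
            FH.rr d (s n) (r n)))) := by
        rw [Finset.prod_mul_distrib]; ring
    _ = ω ^ (∏ n : Fin m, r n) * ω ^ ((d - 1) * ∏ n : Fin m, FH.rr d (s n) (r n)) *
        ∏ n : Fin m, (ω ^ ((d - 1) * ((s n % d ^ 2 / d + FH.cc d (s n) (r n)) *
            FH.rr d (s n) (r n))) *
          ω ^ (FH.tt d (s n) (r n) * q n)) := by
        congr 1
        refine Finset.prod_congr rfl fun n _ => ?_
        rw [← pow_add, ← pow_add]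
        refine FH.pow_congr hd hω1 ?_
        push_cast [FH.rr, FH.tt, ZMod.natCast_mod, hd1, ZMod.natCast_self]
        ring
    _ = _ := by rw [Finset.prod_mul_distrib]; ring

end

/-- Theorem 4.6: the `m`-dimensional array of size `d² × ⋯ × d²` given by
`S[d·q_0+r_0, …, d·q_{m-1}+r_{m-1}] = ω^{∏ r_n + Σ q_n r_n}` (Construction I,
the multi-dimensional Frank–Heimiller generalization) is perfect. -/
theorem constructionI_perfect (m d : ℕ) (hd : 0 < d) :
    ∀ s : Fin m → ℕ, (¬ ∀ n, d ^ 2 ∣ s n) →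
      ∑ x ∈ Fintype.piFinset (fun _ : Fin m => range (d ^ 2)),
        Complex.exp (2 * Real.pi * Complex.I / d) ^
            ((∏ n : Fin m, (x n % d)) + ∑ n : Fin m, (x n / d) * (x n % d)) *
          (starRingEnd ℂ) (Complex.exp (2 * Real.pi * Complex.I / d) ^
            ((∏ n : Fin m, (((x n + s n) % d ^ 2) % d)) +
              ∑ n : Fin m, (((x n + s n) % d ^ 2) / d) * (((x n + s n) % d ^ 2) % d))) = 0 := by
  intro s hs
  have hd2 : 0 < d ^ 2 := by positivity
  have hd1cast : ((d - 1 : ℕ) : ZMod d) = (d : ZMod d) - 1 := by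
    have h1 : 1 ≤ d := hd
    push_cast [Nat.cast_sub h1]
    ring
  have hmem : ∀ {f : Fin m → ℕ}, f ∈ Fintype.piFinset (fun _ : Fin m => range d) →
      ∀ n, f n < d := fun h n => Finset.mem_range.mp (Fintype.mem_piFinset.mp h n)
  rw [FH.reindex hd m]
  simp only []
  rw [Finset.sum_congr rfl (fun r hrP => Finset.sum_congr rfl
    (fun q hqP => FH.term_eq hd s q r (hmem hqP) (hmem hrP)))]
  rw [Finset.sum_congr rfl (fun r _ => by
    rw [← Finset.mul_sum, ← Finset.prod_univ_sum])]
  set ω := Complex.exp (2 * Real.pi * Complex.I / d) with hωdef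
  have hω1 : ω ^ d = 1 := (FH.exp_pow_eq_one_iff hd d).mpr dvd_rfl
  by_cases hτ : ∀ n, s n % d ^ 2 % d = 0
  · -- all τ are zero
    obtain ⟨n0, hn0⟩ := not_forall.mp hs
    have hs0ne : s n0 % d ^ 2 ≠ 0 := fun h => hn0 (Nat.dvd_iff_mod_eq_zero.mpr h)
    have hσne : s n0 % d ^ 2 / d ≠ 0 := by
      intro h
      have hdm := Nat.div_add_mod (s n0 % d ^ 2) d
      rw [h, hτ n0, Nat.mul_zero, add_zero] at hdm
      exact hs0ne hdm.symm
    have hσlt : s n0 % d ^ 2 / d < d := by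
      rw [Nat.div_lt_iff_lt_mul hd, ← sq]
      exact Nat.mod_lt _ hd2
    have hndvd : ¬ d ∣ (d - 1) * (s n0 % d ^ 2 / d) := by
      intro hdvd
      have hz : (((d - 1) * (s n0 % d ^ 2 / d) : ℕ) : ZMod d) = 0 :=
        (ZMod.natCast_eq_zero_iff _ d).mpr hdvd
      have he : (((d - 1) * (s n0 % d ^ 2 / d) : ℕ) : ZMod d) =
          -((s n0 % d ^ 2 / d : ℕ) : ZMod d) := by
        push_cast [hd1cast, ZMod.natCast_self]
        ring
      rw [he] at hz
      have hz' : ((s n0 % d ^ 2 / d : ℕ) : ZMod d) = 0 := neg_eq_zero.mp hz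
      have := Nat.eq_zero_of_dvd_of_lt ((ZMod.natCast_eq_zero_iff _ d).mp hz') hσlt
      exact hσne this
    -- each inner product equals d^m; reduce to sum over r of ω^CC
    have hstep : ∀ r ∈ Fintype.piFinset (fun _ : Fin m => range d),
        ω ^ FH.CC d s r * (∏ n : Fin m, ∑ j ∈ range d, (ω ^ FH.tt d (s n) (r n)) ^ j) =
          (∏ n : Fin m, (ω ^ ((d - 1) * (s n % d ^ 2 / d))) ^ r n) * (d : ℂ) ^ m := by
      intro r hrP
      have hr : ∀ n, r n < d := hmem hrP
      have hrr : ∀ n, FH.rr d (s n) (r n) = r n := fun n => by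
        simp [FH.rr, hτ n, Nat.mod_eq_of_lt (hr n)]
      have hcc : ∀ n, FH.cc d (s n) (r n) = 0 := fun n => by
        simp [FH.cc, hτ n, Nat.div_eq_of_lt (hr n)]
      have htt : ∀ n, FH.tt d (s n) (r n) = d * r n := fun n => by
        have h1 := Nat.sub_one_mul d (r n)
        have h2 : r n ≤ d * r n := Nat.le_mul_of_pos_left _ hd
        simp only [FH.tt, hrr n]
        omega
      have hone : ∀ n, ω ^ FH.tt d (s n) (r n) = 1 := fun n => by
        rw [htt n, pow_mul, hω1, one_pow]
      have hprod : (∏ n : Fin m, ∑ j ∈ range d, (ω ^ FH.tt d (s n) (r n)) ^ j) = (d : ℂ) ^ m := by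
        calc (∏ n : Fin m, ∑ j ∈ range d, (ω ^ FH.tt d (s n) (r n)) ^ j)
            = ∏ n : Fin m, (d : ℂ) := by
              refine Finset.prod_congr rfl fun n _ => ?_
              simp [hone n]
          _ = (d : ℂ) ^ m := by simp
      have hCC : ω ^ FH.CC d s r = ∏ n : Fin m, (ω ^ ((d - 1) * (s n % d ^ 2 / d))) ^ r n := by
        have hCCeq : FH.CC d s r = (∏ n : Fin m, r n) + ((d - 1) * ∏ n : Fin m, r n +
            ∑ n : Fin m, (d - 1) * ((s n % d ^ 2 / d) * r n)) := by
          simp [FH.CC, hrr, hcc]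
        rw [hCCeq, ← add_assoc]
        have hD : (∏ n : Fin m, r n) + (d - 1) * ∏ n : Fin m, r n = d * ∏ n : Fin m, r n := by
          have h1 := Nat.sub_one_mul d (∏ n : Fin m, r n)
          have h2 : (∏ n : Fin m, r n) ≤ d * ∏ n : Fin m, r n := Nat.le_mul_of_pos_left _ hd
          omega
        rw [pow_add, hD, pow_mul, hω1, one_pow, one_mul, ← Finset.prod_pow_eq_pow_sum]
        refine Finset.prod_congr rfl fun n _ => ?_
        rw [← pow_mul, mul_assoc]
      rw [hprod, hCC]
    rw [Finset.sum_congr rfl hstep, ← Finset.sum_mul, ← Finset.prod_univ_sum]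
    rw [Finset.prod_eq_zero (Finset.mem_univ n0), zero_mul]
    refine FH.geom_zero ?_ ?_
    · intro hone
      rw [hωdef] at hone
      exact hndvd ((FH.exp_pow_eq_one_iff hd _).mp hone)
    · rw [← pow_mul, mul_comm, pow_mul, hω1, one_pow]
  · -- some τ is nonzero
    push_neg at hτ
    obtain ⟨n1, hn1⟩ := hτ
    refine Finset.sum_eq_zero fun r hrP => ?_
    have hndvd : ¬ d ∣ FH.tt d (s n1) (r n1) := by
      intro hdvd
      have hz : ((FH.tt d (s n1) (r n1) : ℕ) : ZMod d) = 0 :=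
        (ZMod.natCast_eq_zero_iff _ d).mpr hdvd
      have he : ((FH.tt d (s n1) (r n1) : ℕ) : ZMod d) =
          -((s n1 % d ^ 2 % d : ℕ) : ZMod d) := by
        push_cast [FH.tt, FH.rr, ZMod.natCast_mod, hd1cast, ZMod.natCast_self]
        ring
      rw [he] at hz
      have hz' : ((s n1 % d ^ 2 % d : ℕ) : ZMod d) = 0 := neg_eq_zero.mp hz
      have := Nat.eq_zero_of_dvd_of_lt ((ZMod.natCast_eq_zero_iff _ d).mp hz')
        (Nat.mod_lt _ hd)
      exact hn1 this
    have h0 : ∑ j ∈ range d, (ω ^ FH.tt d (s n1) (r n1)) ^ j = 0 := by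
      refine FH.geom_zero ?_ ?_
      · intro hone
        rw [hωdef] at hone
        exact hndvd ((FH.exp_pow_eq_one_iff hd _).mp hone)
      · rw [← pow_mul, mul_comm, pow_mul, hω1, one_pow]
    rw [Finset.prod_eq_zero (Finset.mem_univ n1) h0, mul_zero]
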